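/- For any p > 2 and τ > 0, the function t ↦ Θ_p(τ; t) is twice differentiable at t = 0 with first derivative 0 and second derivative ∂²/∂t² Θ_p(τ; t)|_{t=0} = p·τ·∑_{z∈ℤ} exp(−τ|z|^p)·|z|^{p−2}·(p·τ·|z|^p − (p−1)); in particular, if τ ≥ 1 − 1/p, this second derivative is strictly positive. -/

import Mathlib

open Real BigOperators

/-- `Θ_p(τ; s) = ∑_{z ∈ ℤ} exp(-τ |z - s|^p)`. -/
noncomputable def Theta1 (p τ s : ℝ) : ℝ :=
  ∑' z : ℤ, Real.exp (-τ * |(z : ℝ) - s| ^ p)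

/-- The claimed value of the second derivative of `t ↦ Θ_p(τ; t)` at `t = 0`:
`p τ ∑_{z ∈ ℤ} exp(−τ|z|^p) |z|^{p−2} (p τ |z|^p − (p−1))`.
(Note that for `z = 0` and `p > 2` the summand is `0` since `|0|^{p-2} = 0`.) -/
noncomputable def thetaSecondDerivAtZero (p τ : ℝ) : ℝ :=
  p * τ * ∑' z : ℤ,
    Real.exp (-τ * |(z : ℝ)| ^ p) * |(z : ℝ)| ^ (p - 2) * (p * τ * |(z : ℝ)| ^ p - (p - 1))

namespace ThetaAux

open Filter Set

lemma sq_rpow (x q : ℝ) : (x ^ 2) ^ (q / 2) = |x| ^ q := by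
  rw [← sq_abs, ← Real.rpow_natCast |x| 2, ← Real.rpow_mul (abs_nonneg x)]
  congr 1
  push_cast
  ring

lemma hasDerivAt_abs_rpow {q : ℝ} (hq : 2 ≤ q) (x : ℝ) :
    HasDerivAt (fun y : ℝ => |y| ^ q) (q * (|x| ^ (q - 2) * x)) x := by
  have h1 : HasDerivAt (fun y : ℝ => y ^ 2) (2 * x) x := by
    simpa using hasDerivAt_pow 2 x
  have h3 : HasDerivAt (fun y : ℝ => (y ^ 2) ^ (q / 2)) (2 * x * (q / 2) * (x ^ 2) ^ (q / 2 - 1)) x :=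
    h1.rpow_const (Or.inr (by linarith))
  have e : (fun y : ℝ => ((y ^ 2) ^ (q / 2))) = fun y : ℝ => |y| ^ q :=
    funext fun y => sq_rpow y q
  rw [e] at h3
  convert h3 using 1
  have h4 : q / 2 - 1 = (q - 2) / 2 := by ring
  rw [h4, sq_rpow x (q - 2)]
  ring

lemma hasDerivAt_abs_rpow_mul {q : ℝ} (hq : 0 < q) (x : ℝ) :
    HasDerivAt (fun y : ℝ => |y| ^ q * y) ((q + 1) * |x| ^ q) x := by
  rcases eq_or_ne x 0 with rfl | hx
  · rw [hasDerivAt_iff_tendsto_slope]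
    have h0 : |(0 : ℝ)| ^ q = 0 := by rw [abs_zero, Real.zero_rpow hq.ne']
    rw [h0, mul_zero]
    have hcont : Filter.Tendsto (fun y : ℝ => |y| ^ q) (nhds 0) (nhds 0) := by
      have : ContinuousAt (fun y : ℝ => |y| ^ q) 0 :=
        ContinuousAt.rpow_const (continuous_abs.continuousAt (x := (0:ℝ))) (Or.inr hq.le)
      simpa [ContinuousAt, h0, Real.zero_rpow hq.ne'] using this
    apply Filter.Tendsto.congr' _ (hcont.mono_left nhdsWithin_le_nhds)
    filter_upwards [self_mem_nhdsWithin] with y hy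
    have hy' : (y : ℝ) ≠ 0 := hy
    simp only [slope_def_field, div_eq_iff hy']
    show |y| ^ q = ((|y| ^ q * y - |(0:ℝ)| ^ q * 0) / (y - 0))
    rw [h0]
    field_simp
    ring
  · have hx2 : (0 : ℝ) < x ^ 2 := by positivity
    have h1 : HasDerivAt (fun y : ℝ => y ^ 2) (2 * x) x := by
      simpa using hasDerivAt_pow 2 x
    have h3 : HasDerivAt (fun y : ℝ => (y ^ 2) ^ (q / 2)) (2 * x * (q / 2) * (x ^ 2) ^ (q / 2 - 1)) x :=
      h1.rpow_const (Or.inl hx2.ne')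
    have e : (fun y : ℝ => ((y ^ 2) ^ (q / 2))) = fun y : ℝ => |y| ^ q :=
      funext fun y => sq_rpow y q
    rw [e] at h3
    have h4 : HasDerivAt (fun y : ℝ => |y| ^ q * y) _ x := h3.mul (hasDerivAt_id x)
    convert h4 using 1
    have key : (x ^ 2) ^ (q / 2 - 1) * x ^ 2 = |x| ^ q := by
      calc (x ^ 2) ^ (q / 2 - 1) * x ^ 2
          = (x ^ 2) ^ (q / 2 - 1) * (x ^ 2) ^ (1 : ℝ) := by rw [Real.rpow_one]
        _ = (x ^ 2) ^ (q / 2 - 1 + 1) := (Real.rpow_add hx2 _ _).symm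
        _ = (x ^ 2) ^ (q / 2) := by norm_num
        _ = |x| ^ q := sq_rpow x q
    rw [← key]
    ring

lemma tsum_int_odd {g : ℤ → ℝ} (h : ∀ z, g (-z) = -g z) : ∑' z : ℤ, g z = 0 := by
  have h1 : ∑' z : ℤ, g (-z) = ∑' z : ℤ, g z := by
    simpa using (Equiv.neg ℤ).tsum_eq g
  have h2 : ∑' z : ℤ, g (-z) = -∑' z : ℤ, g z := by
    rw [tsum_congr fun z => h z, tsum_neg]
  linarith [h1, h2.symm.trans h1]

lemma summable_aux {c b : ℝ} (hb : 0 < b) :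
    Summable (fun z : ℤ => (|(z : ℝ)| + 1) ^ c * Real.exp (-b * |(z : ℝ)|)) := by
  have hnat : Summable (fun n : ℕ => ((n : ℝ) + 1) ^ c * Real.exp (-b * (n : ℝ))) := by
    set r := Real.exp (-b) with hr
    have hr0 : 0 < r := Real.exp_pos _
    have hr1 : r < 1 := by
      rw [hr, Real.exp_lt_one_iff]
      linarith
    set k := ⌈c⌉₊ with hk
    have hsum : Summable (fun n : ℕ => (n : ℝ) ^ k * r ^ n) :=
      summable_pow_mul_geometric_of_norm_lt_one k
        (by rwa [Real.norm_eq_abs, abs_of_pos hr0])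
    have hsum2 : Summable (fun n : ℕ => ((n + 1 : ℕ) : ℝ) ^ k * r ^ (n + 1)) :=
      hsum.comp_injective (add_left_injective 1)
    have hsum3 : Summable (fun n : ℕ => (1 / r) * (((n + 1 : ℕ) : ℝ) ^ k * r ^ (n + 1))) :=
      hsum2.mul_left _
    refine Summable.of_nonneg_of_le (fun n => ?_) (fun n => ?_) hsum3
    · positivity
    have hn1 : (1 : ℝ) ≤ (n : ℝ) + 1 := by
      have := Nat.cast_nonneg (α := ℝ) n
      linarith
    have h1 : ((n : ℝ) + 1) ^ c ≤ ((n : ℝ) + 1) ^ (k : ℝ) :=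
      Real.rpow_le_rpow_of_exponent_le hn1 (Nat.le_ceil c)
    have h1' : ((n : ℝ) + 1) ^ c ≤ ((n : ℝ) + 1) ^ k := by
      rwa [Real.rpow_natCast] at h1
    have h2 : Real.exp (-b * (n : ℝ)) = r ^ n := by
      rw [hr, ← Real.exp_nat_mul]
      ring_nf
    rw [h2]
    have h3 : ((n : ℝ) + 1) ^ c * r ^ n ≤ ((n : ℝ) + 1) ^ k * r ^ n :=
      mul_le_mul_of_nonneg_right h1' (by positivity)
    apply h3.trans
    have : ((n + 1 : ℕ) : ℝ) = (n : ℝ) + 1 := by push_cast; ring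
    rw [this, pow_succ, one_div]
    rw [show r⁻¹ * (((n:ℝ) + 1) ^ k * (r ^ n * r)) = ((n:ℝ) + 1) ^ k * r ^ n * (r⁻¹ * r) by ring,
      inv_mul_cancel₀ hr0.ne', mul_one]
  have hpos : Summable (fun n : ℕ => (|((n : ℤ) : ℝ)| + 1) ^ c * Real.exp (-b * |((n : ℤ) : ℝ)|)) := by
    apply hnat.congr
    intro n
    simp [abs_of_nonneg (by positivity : (0:ℝ) ≤ (n:ℝ))]
  have hneg : Summable (fun n : ℕ => (|((-n : ℤ) : ℝ)| + 1) ^ c * Real.exp (-b * |((-n : ℤ) : ℝ)|)) := by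
    apply hnat.congr
    intro n
    simp [abs_of_nonneg (by positivity : (0:ℝ) ≤ (n:ℝ))]
  exact Summable.of_nat_of_neg hpos hneg

lemma sq_helper {p : ℝ} (hp : 2 < p) (x : ℝ) :
    (|x| ^ (p - 2) * x) ^ 2 = |x| ^ (p - 2) * |x| ^ p := by
  rcases eq_or_ne x 0 with rfl | hx
  · simp [Real.zero_rpow (show p - 2 ≠ 0 by linarith), Real.zero_rpow (show p ≠ 0 by linarith)]
  · have h : (0 : ℝ) < |x| := abs_pos.2 hx
    rw [mul_pow, ← sq_abs x, ← Real.rpow_natCast (|x| ^ (p - 2)) 2,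
      ← Real.rpow_mul (abs_nonneg x), ← Real.rpow_natCast |x| 2,
      ← Real.rpow_add h, ← Real.rpow_add h]
    congr 1
    push_cast
    ring

lemma rpow_sq_helper {M : ℝ} (hM : 0 < M) (p : ℝ) :
    (M ^ (p - 2) * M) ^ 2 = M ^ (2 * p - 2) := by
  rw [mul_pow, ← Real.rpow_natCast (M ^ (p - 2)) 2, ← Real.rpow_mul hM.le,
    ← Real.rpow_natCast M 2, ← Real.rpow_add hM]
  congr 1
  push_cast
  ring

variable {p τ : ℝ}

/-- first derivative of the summand -/
noncomputable def F1 (p τ : ℝ) (z : ℤ) (s : ℝ) : ℝ :=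
  Real.exp (-τ * |(z : ℝ) - s| ^ p) * (τ * (p * (|(z : ℝ) - s| ^ (p - 2) * ((z : ℝ) - s))))

/-- second derivative of the summand -/
noncomputable def F2 (p τ : ℝ) (z : ℤ) (s : ℝ) : ℝ :=
  Real.exp (-τ * |(z : ℝ) - s| ^ p) *
    ((τ * (p * (|(z : ℝ) - s| ^ (p - 2) * ((z : ℝ) - s)))) ^ 2
      - τ * (p * ((p - 1) * |(z : ℝ) - s| ^ (p - 2))))

/-- the comparison function -/
noncomputable def U (τ c : ℝ) (z : ℤ) : ℝ :=
  (|(z : ℝ)| + 1) ^ c * Real.exp (-(τ / 2) * |(z : ℝ)|)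

lemma summable_U (hτ : 0 < τ) (c : ℝ) : Summable (U τ c) :=
  summable_aux (by positivity)

lemma hasDerivAt_F (hp : 2 < p) (z : ℤ) (s : ℝ) :
    HasDerivAt (fun s : ℝ => Real.exp (-τ * |(z : ℝ) - s| ^ p)) (F1 p τ z s) s := by
  have inner : HasDerivAt (fun s : ℝ => (z : ℝ) - s) (-1) s := by
    simpa using (hasDerivAt_id s).const_sub ((z : ℝ))
  have habs : HasDerivAt (fun s : ℝ => |(z : ℝ) - s| ^ p)
      (p * (|(z : ℝ) - s| ^ (p - 2) * ((z : ℝ) - s)) * -1) s :=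
    (hasDerivAt_abs_rpow hp.le ((z : ℝ) - s)).comp s inner
  have h2 := (habs.const_mul (-τ)).exp
  convert h2 using 1
  unfold F1
  ring

lemma hasDerivAt_F1 (hp : 2 < p) (z : ℤ) (s : ℝ) :
    HasDerivAt (F1 p τ z) (F2 p τ z s) s := by
  have inner : HasDerivAt (fun s : ℝ => (z : ℝ) - s) (-1) s := by
    simpa using (hasDerivAt_id s).const_sub ((z : ℝ))
  have hg : HasDerivAt (fun s : ℝ => |(z : ℝ) - s| ^ (p - 2) * ((z : ℝ) - s))
      ((p - 2 + 1) * |(z : ℝ) - s| ^ (p - 2) * -1) s :=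
    (hasDerivAt_abs_rpow_mul (show (0:ℝ) < p - 2 by linarith) ((z : ℝ) - s)).comp s inner
  have hw : HasDerivAt (fun s : ℝ => τ * (p * (|(z : ℝ) - s| ^ (p - 2) * ((z : ℝ) - s))))
      (τ * (p * ((p - 2 + 1) * |(z : ℝ) - s| ^ (p - 2) * -1))) s :=
    (hg.const_mul p).const_mul τ
  have hu := hasDerivAt_F (τ := τ) hp z s
  have h2 : HasDerivAt (F1 p τ z) _ s := hu.mul hw
  convert h2 using 1
  unfold F1 F2
  ring

lemma abs_sub_le_bound (z : ℤ) {s : ℝ} (hs : s ∈ Set.Ioo (-(1:ℝ)/2) (1/2)) :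
    |(z : ℝ) - s| ≤ |(z : ℝ)| + 1 := by
  have h1 : |(z : ℝ) - s| ≤ |(z : ℝ)| + |s| := abs_sub _ _
  have h2 : |s| < 1/2 := abs_lt.2 ⟨by linarith [hs.1], hs.2⟩
  linarith

lemma rpow_lower_bound (hp : 2 < p) (z : ℤ) {s : ℝ}
    (hs : s ∈ Set.Ioo (-(1:ℝ)/2) (1/2)) :
    |(z : ℝ)| / 2 - 1 ≤ |(z : ℝ) - s| ^ p := by
  rcases eq_or_ne z 0 with rfl | hz
  · push_cast
    simp only [zero_sub, abs_neg, abs_zero]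
    have h0 : (0:ℝ) ≤ |s| ^ p := Real.rpow_nonneg (abs_nonneg _) _
    linarith
  · have hz1 : (1 : ℝ) ≤ |(z : ℝ)| := by
      have h := Int.one_le_abs (by exact_mod_cast hz : z ≠ 0)
      calc (1:ℝ) = ((1:ℤ):ℝ) := by norm_num
        _ ≤ ((|z| : ℤ) : ℝ) := by exact_mod_cast h
        _ = |(z:ℝ)| := by push_cast; ring
    have hsabs : |s| < 1/2 := abs_lt.2 ⟨by linarith [hs.1], hs.2⟩
    have hge : |(z : ℝ)| / 2 ≤ |(z : ℝ) - s| := by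
      have := abs_sub_abs_le_abs_sub ((z:ℝ)) s
      linarith
    have h1 : (|(z : ℝ)| / 2) ^ p ≤ |(z : ℝ) - s| ^ p :=
      Real.rpow_le_rpow (by positivity) hge (by linarith)
    rcases le_or_gt 1 (|(z : ℝ)| / 2) with ht | ht
    · have h2 : |(z : ℝ)| / 2 ≤ (|(z : ℝ)| / 2) ^ p := by
        calc |(z : ℝ)| / 2 = (|(z : ℝ)| / 2) ^ (1:ℝ) := (Real.rpow_one _).symm
          _ ≤ (|(z : ℝ)| / 2) ^ p := Real.rpow_le_rpow_of_exponent_le ht (by linarith)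
      linarith
    · have h2 : (0:ℝ) ≤ (|(z : ℝ)| / 2) ^ p := Real.rpow_nonneg (by positivity) _
      linarith

lemma one_le_abs_cast {z : ℤ} (hz : z ≠ 0) : (1:ℝ) ≤ |(z : ℝ)| := by
  have h := Int.one_le_abs (by exact_mod_cast hz : z ≠ 0)
  calc (1:ℝ) = ((1:ℤ):ℝ) := by norm_num
    _ ≤ ((|z| : ℤ) : ℝ) := by exact_mod_cast h
    _ = |(z:ℝ)| := by push_cast; ring

lemma exp_bound (hp : 2 < p) (hτ : 0 < τ) (z : ℤ) {s : ℝ}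
    (hs : s ∈ Set.Ioo (-(1:ℝ)/2) (1/2)) :
    Real.exp (-τ * |(z : ℝ) - s| ^ p) ≤ Real.exp τ * Real.exp (-(τ / 2) * |(z : ℝ)|) := by
  rw [← Real.exp_add]
  apply Real.exp_le_exp.2
  have h := rpow_lower_bound hp z hs
  nlinarith [mul_le_mul_of_nonneg_left h hτ.le]

lemma hsplit_abs (hp : 2 < p) (x : ℝ) :
    |x| ^ (p - 1) = |x| ^ (p - 2) * |x| := by
  rw [show p - 1 = p - 2 + 1 by ring,
    Real.rpow_add' (abs_nonneg _) (by intro h; exact (show p ≠ 1 by linarith) (by linarith)),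
    Real.rpow_one]

lemma norm_F1_le (hp : 2 < p) (hτ : 0 < τ) (z : ℤ) {s : ℝ}
    (hs : s ∈ Set.Ioo (-(1:ℝ)/2) (1/2)) :
    ‖F1 p τ z s‖ ≤ (τ * p * Real.exp τ) * U τ (p - 1) z := by
  have hp0 : (0:ℝ) < p := by linarith
  have hrw : ‖F1 p τ z s‖
      = Real.exp (-τ * |(z : ℝ) - s| ^ p) * (τ * (p * |(z : ℝ) - s| ^ (p - 1))) := by
    rw [hsplit_abs hp]
    unfold F1
    rw [Real.norm_eq_abs, abs_mul, abs_of_pos (Real.exp_pos _), abs_mul, abs_of_pos hτ,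
      abs_mul, abs_of_pos hp0, abs_mul,
      abs_of_nonneg (Real.rpow_nonneg (abs_nonneg _) _)]
  rw [hrw]
  have h1 := exp_bound hp hτ z hs
  have h2 : |(z : ℝ) - s| ^ (p - 1) ≤ (|(z : ℝ)| + 1) ^ (p - 1) :=
    Real.rpow_le_rpow (abs_nonneg _) (abs_sub_le_bound z hs) (by linarith)
  calc Real.exp (-τ * |(z : ℝ) - s| ^ p) * (τ * (p * |(z : ℝ) - s| ^ (p - 1)))
      ≤ (Real.exp τ * Real.exp (-(τ / 2) * |(z : ℝ)|))
        * (τ * (p * (|(z : ℝ)| + 1) ^ (p - 1))) := by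
        apply mul_le_mul h1 _ (by positivity) (by positivity)
        exact mul_le_mul_of_nonneg_left (mul_le_mul_of_nonneg_left h2 hp0.le) hτ.le
    _ = (τ * p * Real.exp τ) * U τ (p - 1) z := by unfold U; ring

lemma norm_F2_le (hp : 2 < p) (hτ : 0 < τ) (z : ℤ) {s : ℝ}
    (hs : s ∈ Set.Ioo (-(1:ℝ)/2) (1/2)) :
    ‖F2 p τ z s‖ ≤ Real.exp τ *
      ((τ * p) ^ 2 * U τ (2 * p - 2) z + (τ * p * (p - 1)) * U τ (p - 2) z) := by
  have hp0 : (0:ℝ) < p := by linarith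
  set x := (z : ℝ) - s with hxdef
  set M := |(z : ℝ)| + 1 with hMdef
  have hM : (0:ℝ) < M := by positivity
  have hxM : |x| ≤ M := abs_sub_le_bound z hs
  have hA : |x| ^ (p - 2) ≤ M ^ (p - 2) :=
    Real.rpow_le_rpow (abs_nonneg _) hxM (by linarith)
  have hAnn : (0:ℝ) ≤ |x| ^ (p - 2) := Real.rpow_nonneg (abs_nonneg _) _
  have hMnn : (0:ℝ) ≤ M ^ (p - 2) := Real.rpow_nonneg hM.le _
  have hCnn : (0:ℝ) ≤ τ * (p * ((p - 1) * |x| ^ (p - 2))) :=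
    mul_nonneg hτ.le (mul_nonneg hp0.le (mul_nonneg (by linarith) hAnn))
  have hstep1 : ‖F2 p τ z s‖ ≤ Real.exp (-τ * |x| ^ p) *
      ((τ * (p * (|x| ^ (p - 2) * x))) ^ 2 + τ * (p * ((p - 1) * |x| ^ (p - 2)))) := by
    unfold F2
    rw [Real.norm_eq_abs, abs_mul, abs_of_pos (Real.exp_pos _)]
    apply mul_le_mul_of_nonneg_left _ (Real.exp_pos _).le
    apply (abs_sub _ _).trans
    rw [abs_of_nonneg (sq_nonneg _), abs_of_nonneg hCnn]
  have hsq : (τ * (p * (|x| ^ (p - 2) * x))) ^ 2 ≤ (τ * p) ^ 2 * (M ^ (p - 2) * M) ^ 2 := by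
    have e1 : (τ * (p * (|x| ^ (p - 2) * x))) ^ 2
        = (τ * p) ^ 2 * ((|x| ^ (p - 2)) ^ 2 * x ^ 2) := by ring
    have e2 : (|x| ^ (p - 2)) ^ 2 * x ^ 2 ≤ (M ^ (p - 2)) ^ 2 * M ^ 2 := by
      apply mul_le_mul (pow_le_pow_left₀ hAnn hA 2) _ (sq_nonneg _) (by positivity)
      rw [← sq_abs x]
      exact pow_le_pow_left₀ (abs_nonneg _) hxM 2
    rw [e1, show (τ * p) ^ 2 * (M ^ (p - 2) * M) ^ 2
        = (τ * p) ^ 2 * ((M ^ (p - 2)) ^ 2 * M ^ 2) by ring]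
    exact mul_le_mul_of_nonneg_left e2 (by positivity)
  have hC : τ * (p * ((p - 1) * |x| ^ (p - 2))) ≤ τ * p * (p - 1) * M ^ (p - 2) := by
    rw [show τ * (p * ((p - 1) * |x| ^ (p - 2))) = τ * p * (p - 1) * |x| ^ (p - 2) by ring]
    exact mul_le_mul_of_nonneg_left hA (mul_nonneg (mul_nonneg hτ.le hp0.le) (by linarith))
  have hexp := exp_bound hp hτ z hs
  calc ‖F2 p τ z s‖
      ≤ Real.exp (-τ * |x| ^ p) *
        ((τ * (p * (|x| ^ (p - 2) * x))) ^ 2 + τ * (p * ((p - 1) * |x| ^ (p - 2)))) := hstep1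
    _ ≤ (Real.exp τ * Real.exp (-(τ / 2) * |(z : ℝ)|)) *
        ((τ * p) ^ 2 * (M ^ (p - 2) * M) ^ 2 + τ * p * (p - 1) * M ^ (p - 2)) := by
        exact mul_le_mul hexp (add_le_add hsq hC) (add_nonneg (sq_nonneg _) hCnn)
          (by positivity)
    _ = Real.exp τ *
        ((τ * p) ^ 2 * U τ (2 * p - 2) z + (τ * p * (p - 1)) * U τ (p - 2) z) := by
        unfold U
        rw [rpow_sq_helper hM p]
        ring

lemma F2_zero_eq (hp : 2 < p) (z : ℤ) :
    F2 p τ z 0 = p * τ *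
      (Real.exp (-τ * |(z : ℝ)| ^ p) * |(z : ℝ)| ^ (p - 2)
        * (p * τ * |(z : ℝ)| ^ p - (p - 1))) := by
  have key := sq_helper hp ((z : ℝ))
  unfold F2
  rw [sub_zero]
  linear_combination Real.exp (-τ * |(z : ℝ)| ^ p) * τ ^ 2 * p ^ 2 * key

end ThetaAux

/-- For any `p > 2` and `τ > 0`, the function `t ↦ Θ_p(τ; t)` is twice differentiable at
`t = 0`, with first derivative `0` and second derivative
`p τ ∑_{z∈ℤ} exp(−τ|z|^p) |z|^{p−2} (p τ |z|^p − (p−1))`; in particular, if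
`τ ≥ 1 − 1/p`, this second derivative is strictly positive. -/
theorem theta_hasDerivAt_zero (p τ : ℝ) (hp : 2 < p) (hτ : 0 < τ) :
    HasDerivAt (fun s => Theta1 p τ s) 0 0 ∧
    HasDerivAt (deriv (fun s => Theta1 p τ s)) (thetaSecondDerivAtZero p τ) 0 ∧
    (1 - 1 / p ≤ τ → 0 < thetaSecondDerivAtZero p τ) := by
  classical
  have hp0 : (0:ℝ) < p := by linarith
  have h0S : (0:ℝ) ∈ Set.Ioo (-(1:ℝ)/2) (1/2) := by constructor <;> norm_num
  have hu1 : Summable (fun z : ℤ => (τ * p * Real.exp τ) * ThetaAux.U τ (p - 1) z) :=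
    (ThetaAux.summable_U hτ (p - 1)).mul_left _
  have hu2 : Summable (fun z : ℤ => Real.exp τ *
      ((τ * p) ^ 2 * ThetaAux.U τ (2 * p - 2) z
        + (τ * p * (p - 1)) * ThetaAux.U τ (p - 2) z)) := by
    apply Summable.mul_left
    exact ((ThetaAux.summable_U hτ (2*p-2)).mul_left _).add
      ((ThetaAux.summable_U hτ (p-2)).mul_left _)
  have hF0 : Summable (fun z : ℤ => Real.exp (-τ * |(z : ℝ) - 0| ^ p)) := by
    apply Summable.of_norm_bounded ((ThetaAux.summable_U hτ 0).mul_left (Real.exp τ))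
    intro z
    rw [Real.norm_eq_abs, abs_of_pos (Real.exp_pos _)]
    calc Real.exp (-τ * |(z:ℝ) - 0| ^ p)
        ≤ Real.exp τ * Real.exp (-(τ/2) * |(z:ℝ)|) := ThetaAux.exp_bound hp hτ z h0S
      _ = Real.exp τ * ThetaAux.U τ 0 z := by
          unfold ThetaAux.U
          rw [Real.rpow_zero, one_mul]
  have key1 : ∀ y ∈ Set.Ioo (-(1:ℝ)/2) (1/2),
      HasDerivAt (fun s : ℝ => ∑' z : ℤ, Real.exp (-τ * |(z : ℝ) - s| ^ p))
      (∑' z : ℤ, ThetaAux.F1 p τ z y) y := by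
    intro y hy
    exact hasDerivAt_tsum_of_isPreconnected hu1 isOpen_Ioo isPreconnected_Ioo
      (fun z s _ => ThetaAux.hasDerivAt_F hp z s)
      (fun z s hs => ThetaAux.norm_F1_le hp hτ z hs) h0S hF0 hy
  have hTheta : (fun s => Theta1 p τ s)
      = fun s : ℝ => ∑' z : ℤ, Real.exp (-τ * |(z : ℝ) - s| ^ p) := rfl
  have part1 : HasDerivAt (fun s => Theta1 p τ s) (∑' z : ℤ, ThetaAux.F1 p τ z 0) 0 := by
    rw [hTheta]
    exact key1 0 h0S
  have hodd : ∑' z : ℤ, ThetaAux.F1 p τ z 0 = 0 := by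
    apply ThetaAux.tsum_int_odd
    intro z
    unfold ThetaAux.F1
    push_cast
    rw [sub_zero, sub_zero, abs_neg]
    ring
  have SF1_0 : Summable (fun z : ℤ => ThetaAux.F1 p τ z 0) :=
    Summable.of_norm_bounded hu1 (fun z => ThetaAux.norm_F1_le hp hτ z h0S)
  have key2 : HasDerivAt (fun s : ℝ => ∑' z : ℤ, ThetaAux.F1 p τ z s)
      (∑' z : ℤ, ThetaAux.F2 p τ z 0) 0 :=
    hasDerivAt_tsum_of_isPreconnected hu2 isOpen_Ioo isPreconnected_Ioo
      (fun z s _ => ThetaAux.hasDerivAt_F1 hp z s)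
      (fun z s hs => ThetaAux.norm_F2_le hp hτ z hs) h0S SF1_0 h0S
  have hev : deriv (fun s => Theta1 p τ s)
      =ᶠ[nhds 0] fun s : ℝ => ∑' z : ℤ, ThetaAux.F1 p τ z s := by
    filter_upwards [isOpen_Ioo.mem_nhds h0S] with y hy
    rw [hTheta]
    exact (key1 y hy).deriv
  have part2 : HasDerivAt (deriv (fun s => Theta1 p τ s)) (∑' z : ℤ, ThetaAux.F2 p τ z 0) 0 :=
    key2.congr_of_eventuallyEq hev
  have hsum_eq : ∑' z : ℤ, ThetaAux.F2 p τ z 0 = thetaSecondDerivAtZero p τ := by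
    unfold thetaSecondDerivAtZero
    rw [← tsum_mul_left]
    exact tsum_congr fun z => ThetaAux.F2_zero_eq hp z
  refine ⟨by rwa [hodd] at part1, by rwa [hsum_eq] at part2, ?_⟩
  intro hτ'
  have hptτ : (0:ℝ) < p * τ := mul_pos hp0 hτ
  have hSF2 : Summable (fun z : ℤ => ThetaAux.F2 p τ z 0) :=
    Summable.of_norm_bounded hu2 (fun z => ThetaAux.norm_F2_le hp hτ z h0S)
  have hSg : Summable (fun z : ℤ => Real.exp (-τ * |(z : ℝ)| ^ p) * |(z : ℝ)| ^ (p - 2)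
      * (p * τ * |(z : ℝ)| ^ p - (p - 1))) := by
    have h1 : Summable (fun z : ℤ => p * τ * (Real.exp (-τ * |(z : ℝ)| ^ p)
        * |(z : ℝ)| ^ (p - 2) * (p * τ * |(z : ℝ)| ^ p - (p - 1)))) :=
      hSF2.congr (fun z => ThetaAux.F2_zero_eq hp z)
    exact (summable_mul_left_iff hptτ.ne').mp h1
  have hpτ_ge : p - 1 ≤ p * τ := by
    have hineq : p * (1 - 1/p) ≤ p * τ := mul_le_mul_of_nonneg_left hτ' hp0.le
    have he : p * (1 - 1/p) = p - 1 := by field_simp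
    linarith
  have hnonneg : ∀ z : ℤ, 0 ≤ Real.exp (-τ * |(z : ℝ)| ^ p) * |(z : ℝ)| ^ (p - 2)
      * (p * τ * |(z : ℝ)| ^ p - (p - 1)) := by
    intro z
    rcases eq_or_ne z 0 with rfl | hz
    · simp [Real.zero_rpow (show p - 2 ≠ 0 by linarith)]
    · have hz1 : (1 : ℝ) ≤ |(z : ℝ)| := ThetaAux.one_le_abs_cast hz
      have hzp : (1:ℝ) ≤ |(z:ℝ)| ^ p := Real.one_le_rpow hz1 hp0.le
      apply mul_nonneg (mul_nonneg (Real.exp_pos _).le (Real.rpow_nonneg (abs_nonneg _) _))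
      nlinarith
  have h2p : (2:ℝ) ≤ (2:ℝ) ^ p := by
    calc (2:ℝ) = (2:ℝ) ^ (1:ℝ) := (Real.rpow_one _).symm
      _ ≤ (2:ℝ) ^ p := Real.rpow_le_rpow_of_exponent_le one_le_two (by linarith)
  have habs2 : |(((2:ℤ)) : ℝ)| = 2 := by norm_num
  have hpos2 : 0 < Real.exp (-τ * |(((2:ℤ)) : ℝ)| ^ p) * |(((2:ℤ)) : ℝ)| ^ (p - 2)
      * (p * τ * |(((2:ℤ)) : ℝ)| ^ p - (p - 1)) := by
    rw [habs2]
    apply mul_pos (mul_pos (Real.exp_pos _) (Real.rpow_pos_of_pos two_pos _))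
    nlinarith [h2p, hpτ_ge]
  have hts := Summable.tsum_pos hSg hnonneg 2 hpos2
  unfold thetaSecondDerivAtZero
  exact mul_pos hptτ hts
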